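/- Let e_α := (−sin α, cos α), J(x,y) = (−y,x), let p : ℝ → ℝ be a C² function, and define γ(α) := p'(α)e_α − p(α)Je_α. Then 2∬_{[0,π]²} ω(γ'(α₁),γ'(α₂))² dα₁dα₂ = (∫₀^π (p''(α)+p(α))² dα)² − (∫₀^π (p''(α)+p(α))² cos(2α) dα)² − (∫₀^π (p''(α)+p(α))² sin(2α) dα)². -/

import Mathlib

open Real

/-- The standard area form (determinant) on `ℝ²`. -/
def omega2 (u v : ℝ × ℝ) : ℝ := u.1 * v.2 - u.2 * v.1

/-- The unit vector forming an angle `α` with the vertical direction `(0,1)`. -/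
noncomputable def eVec (α : ℝ) : ℝ × ℝ := (-Real.sin α, Real.cos α)

/-- Rotation by `π/2` in the positive direction. -/
def Jrot (v : ℝ × ℝ) : ℝ × ℝ := (-v.2, v.1)

theorem stmt_11 (p : ℝ → ℝ) (hp : ContDiff ℝ 2 p)
    (γ : ℝ → ℝ × ℝ)
    (hγ : ∀ α : ℝ, γ α = deriv p α • eVec α - p α • Jrot (eVec α)) :
    2 * (∫ α₁ in (0:ℝ)..π, ∫ α₂ in (0:ℝ)..π,
        (omega2 (deriv γ α₁) (deriv γ α₂)) ^ 2) =
      (∫ α in (0:ℝ)..π, (deriv (deriv p) α + p α) ^ 2) ^ 2 -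
      (∫ α in (0:ℝ)..π, (deriv (deriv p) α + p α) ^ 2 * Real.cos (2 * α)) ^ 2 -
      (∫ α in (0:ℝ)..π, (deriv (deriv p) α + p α) ^ 2 * Real.sin (2 * α)) ^ 2 := by
  have hp2 : ContDiff ℝ (1 + 1 : ℕ) p := by norm_num; exact hp
  have hd1 : ContDiff ℝ 1 (deriv p) := by
    have := (contDiff_succ_iff_deriv (n := 1)).mp (by exact_mod_cast hp2)
    exact this.2.2
  have hpd : Differentiable ℝ p := hp.differentiable (by norm_num)
  have hpd1 : Differentiable ℝ (deriv p) := hd1.differentiable (by norm_num)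
  set q : ℝ → ℝ := fun α => deriv (deriv p) α + p α with hqdef
  have hqc : Continuous q := (hd1.continuous_deriv le_rfl).add hp.continuous
  -- derivative of γ
  have hderiv : ∀ α, deriv γ α = q α • eVec α := by
    have hγeq : γ = fun α => (deriv p α * (-Real.sin α) - p α * (-Real.cos α),
        deriv p α * Real.cos α - p α * (-Real.sin α)) := by
      funext α; rw [hγ]; rfl
    intro α
    have h1 : HasDerivAt p (deriv p α) α := (hpd α).hasDerivAt
    have h2 : HasDerivAt (deriv p) (deriv (deriv p) α) α := (hpd1 α).hasDerivAt
    have hf : HasDerivAt (fun α => deriv p α * (-Real.sin α) - p α * (-Real.cos α))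
        (deriv (deriv p) α * (-Real.sin α) + deriv p α * (-Real.cos α) -
          (deriv p α * (-Real.cos α) + p α * (Real.sin α))) α := by
      have := (h2.mul (Real.hasDerivAt_sin α).neg).sub (h1.mul (Real.hasDerivAt_cos α).neg)
      exact this.congr_deriv (by simp only [Pi.neg_apply]; ring)
    have hg : HasDerivAt (fun α => deriv p α * Real.cos α - p α * (-Real.sin α))
        (deriv (deriv p) α * Real.cos α + deriv p α * (-Real.sin α) -
          (deriv p α * (-Real.sin α) + p α * (-Real.cos α))) α := by
      have := (h2.mul (Real.hasDerivAt_cos α)).sub (h1.mul (Real.hasDerivAt_sin α).neg)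
      exact this.congr_deriv (by simp only [Pi.neg_apply])
    have hγ' : HasDerivAt γ (q α • eVec α) α := by
      rw [hγeq]
      convert hf.prodMk hg using 1
      simp only [q, eVec, Prod.smul_mk, smul_eq_mul, Prod.mk.injEq]
      constructor <;> ring
    exact hγ'.deriv
  -- pointwise identity
  have hkey : ∀ α₁ α₂ : ℝ, 2 * (omega2 (deriv γ α₁) (deriv γ α₂)) ^ 2 =
      q α₁ ^ 2 * q α₂ ^ 2 -
        (q α₁ ^ 2 * Real.cos (2 * α₁)) * (q α₂ ^ 2 * Real.cos (2 * α₂)) -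
        (q α₁ ^ 2 * Real.sin (2 * α₁)) * (q α₂ ^ 2 * Real.sin (2 * α₂)) := by
    intro α₁ α₂
    rw [hderiv, hderiv]
    simp only [omega2, eVec, Prod.smul_mk, smul_eq_mul,
      Real.cos_two_mul, Real.sin_two_mul]
    have h1 := Real.sin_sq_add_cos_sq α₁
    have h2 := Real.sin_sq_add_cos_sq α₂
    linear_combination (2 * q α₁ ^ 2 * q α₂ ^ 2 * Real.cos α₂ ^ 2) * h1 +
      (2 * q α₁ ^ 2 * q α₂ ^ 2 * Real.cos α₁ ^ 2) * h2
  -- integrability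
  have hi1 : IntervalIntegrable (fun α => q α ^ 2) MeasureTheory.volume 0 π :=
    (hqc.pow 2).intervalIntegrable 0 π
  have hi2 : IntervalIntegrable (fun α => q α ^ 2 * Real.cos (2 * α))
      MeasureTheory.volume 0 π :=
    ((hqc.pow 2).mul (Real.continuous_cos.comp (continuous_const.mul continuous_id))).intervalIntegrable 0 π
  have hi3 : IntervalIntegrable (fun α => q α ^ 2 * Real.sin (2 * α))
      MeasureTheory.volume 0 π :=
    ((hqc.pow 2).mul (Real.continuous_sin.comp (continuous_const.mul continuous_id))).intervalIntegrable 0 π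
  set A : ℝ := ∫ α in (0:ℝ)..π, q α ^ 2 with hA
  set C : ℝ := ∫ α in (0:ℝ)..π, q α ^ 2 * Real.cos (2 * α) with hC
  set S : ℝ := ∫ α in (0:ℝ)..π, q α ^ 2 * Real.sin (2 * α) with hS
  have inner : ∀ α₁ : ℝ, (∫ α₂ in (0:ℝ)..π, 2 * (omega2 (deriv γ α₁) (deriv γ α₂)) ^ 2)
      = q α₁ ^ 2 * A - (q α₁ ^ 2 * Real.cos (2 * α₁)) * C -
        (q α₁ ^ 2 * Real.sin (2 * α₁)) * S := by
    intro α₁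
    have : (∫ α₂ in (0:ℝ)..π, 2 * (omega2 (deriv γ α₁) (deriv γ α₂)) ^ 2)
        = ∫ α₂ in (0:ℝ)..π, (q α₁ ^ 2 * q α₂ ^ 2 -
            (q α₁ ^ 2 * Real.cos (2 * α₁)) * (q α₂ ^ 2 * Real.cos (2 * α₂)) -
            (q α₁ ^ 2 * Real.sin (2 * α₁)) * (q α₂ ^ 2 * Real.sin (2 * α₂))) := by
      refine intervalIntegral.integral_congr fun α₂ _ => ?_
      exact hkey α₁ α₂
    rw [this, intervalIntegral.integral_sub ((hi1.const_mul _).sub (hi2.const_mul _))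
        (hi3.const_mul _),
      intervalIntegral.integral_sub (hi1.const_mul _) (hi2.const_mul _),
      intervalIntegral.integral_const_mul, intervalIntegral.integral_const_mul,
      intervalIntegral.integral_const_mul]
  have Lhs : 2 * (∫ α₁ in (0:ℝ)..π, ∫ α₂ in (0:ℝ)..π,
      (omega2 (deriv γ α₁) (deriv γ α₂)) ^ 2) = A * A - C * C - S * S := by
    calc 2 * (∫ α₁ in (0:ℝ)..π, ∫ α₂ in (0:ℝ)..π,
        (omega2 (deriv γ α₁) (deriv γ α₂)) ^ 2)
        = ∫ α₁ in (0:ℝ)..π, 2 * ∫ α₂ in (0:ℝ)..π,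
            (omega2 (deriv γ α₁) (deriv γ α₂)) ^ 2 :=
          (intervalIntegral.integral_const_mul 2 _).symm
      _ = ∫ α₁ in (0:ℝ)..π, (q α₁ ^ 2 * A - (q α₁ ^ 2 * Real.cos (2 * α₁)) * C -
            (q α₁ ^ 2 * Real.sin (2 * α₁)) * S) := by
          refine intervalIntegral.integral_congr fun α₁ _ => ?_
          rw [← inner α₁, intervalIntegral.integral_const_mul]
      _ = A * A - C * C - S * S := by
          have e1 : ∀ α₁ : ℝ, q α₁ ^ 2 * A - (q α₁ ^ 2 * Real.cos (2 * α₁)) * C -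
              (q α₁ ^ 2 * Real.sin (2 * α₁)) * S
              = q α₁ ^ 2 * A - (q α₁ ^ 2 * Real.cos (2 * α₁)) * C -
                (q α₁ ^ 2 * Real.sin (2 * α₁)) * S := fun _ => rfl
          rw [intervalIntegral.integral_sub
              ((hi1.mul_const _).sub (hi2.mul_const _)) (hi3.mul_const _),
            intervalIntegral.integral_sub (hi1.mul_const _) (hi2.mul_const _),
            intervalIntegral.integral_mul_const, intervalIntegral.integral_mul_const,
            intervalIntegral.integral_mul_const]
  rw [Lhs]; ring
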